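/- Let (G,W) be a d-regular matrix-weighted graph on n vertices with k×k weight matrices and adjacency matrix A. For a vertex subset S, let I_S be the kn×k block matrix whose block at vertex v is I_k if v ∈ S and 0 otherwise, let I_G = I_V, and let I_S^⊥ = I_S − (|S|/n)·I_G, and similarly for T. Then E(S,T) − (d·|S|·|T|/n)·I_k = (I_S^⊥)ᵀ A I_T^⊥. -/

import Mathlib

open Matrix Finset

noncomputable section

/-- The adjacency matrix of a matrix-weighted graph: the `kn × kn` block matrix
whose `(u,v)` block is the weight matrix `W u v`. -/
def mwAdj (n k : ℕ) (W : Fin n → Fin n → Matrix (Fin k) (Fin k) ℝ) :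
    Matrix (Fin n × Fin k) (Fin n × Fin k) ℝ :=
  fun p q => W p.1 q.1 p.2 q.2

/-- The degree matrix of a matrix-weighted graph: block diagonal, with
`(v,v)` block `D_v = ∑ u, W u v`. -/
def mwDeg (n k : ℕ) (W : Fin n → Fin n → Matrix (Fin k) (Fin k) ℝ) :
    Matrix (Fin n × Fin k) (Fin n × Fin k) ℝ :=
  fun p q => if p.1 = q.1 then (∑ u, W u p.1) p.2 q.2 else 0

/-- The Laplacian `L = D - A` of a matrix-weighted graph. -/
def mwLap (n k : ℕ) (W : Fin n → Fin n → Matrix (Fin k) (Fin k) ℝ) :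
    Matrix (Fin n × Fin k) (Fin n × Fin k) ℝ :=
  mwDeg n k W - mwAdj n k W

/-- The matrix-weighted edge count between vertex subsets `S` and `T`:
`E(S,T) = ∑_{s ∈ S, t ∈ T} W s t`, a `k × k` matrix. -/
def mwEdge (n k : ℕ) (W : Fin n → Fin n → Matrix (Fin k) (Fin k) ℝ)
    (S T : Finset (Fin n)) : Matrix (Fin k) (Fin k) ℝ :=
  ∑ s ∈ S, ∑ t ∈ T, W s t

/-- The `kn × k` block indicator matrix of a vertex subset `S`: the block at a
vertex `v` is `I_k` if `v ∈ S` and `0` otherwise. -/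
def mwInd (n k : ℕ) (S : Finset (Fin n)) : Matrix (Fin n × Fin k) (Fin k) ℝ :=
  fun p j => if p.1 ∈ S ∧ p.2 = j then 1 else 0

lemma mwInd_adj (n k : ℕ) (W : Fin n → Fin n → Matrix (Fin k) (Fin k) ℝ)
    (S T : Finset (Fin n)) :
    (mwInd n k S)ᵀ * mwAdj n k W * (mwInd n k T) = mwEdge n k W S T := by
  ext i j
  simp only [Matrix.mul_apply, mwAdj, mwInd, mwEdge, Matrix.transpose_apply,
    Fintype.sum_prod_type, Finset.sum_apply, ite_and, Finset.sum_ite_eq',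
    Finset.sum_ite_mem, Finset.mul_sum, Finset.sum_mul, ite_mul, mul_ite,
    one_mul, mul_one, zero_mul, mul_zero, Finset.sum_ite_irrel, Finset.sum_const_zero]
  rw [Finset.sum_comm]
  simp [Matrix.sum_apply]

/-- Key identity in the proof of the expander mixing lemma for `d`-regular
matrix-weighted graphs: with `I_S^⊥ = I_S - (|S|/n) I_G` (and similarly for `T`),
`E(S,T) - (d|S||T|/n) I_k = (I_S^⊥)ᵀ A I_T^⊥`. -/
theorem matrix_weighted_expander_mixing_identity
    (n k : ℕ) (d : ℝ) (G : SimpleGraph (Fin n))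
    (W : Fin n → Fin n → Matrix (Fin k) (Fin k) ℝ)
    (hpsd : ∀ u v, (W u v).PosSemidef)
    (hsym : ∀ u v, W u v = W v u)
    (h0 : ∀ u v, ¬ G.Adj u v → W u v = 0)
    (hreg : ∀ v : Fin n, ∑ u, W u v = d • (1 : Matrix (Fin k) (Fin k) ℝ))
    (S T : Finset (Fin n)) :
    mwEdge n k W S T -
        (d * S.card * T.card / n) • (1 : Matrix (Fin k) (Fin k) ℝ) =
      (mwInd n k S - ((S.card : ℝ) / n) • mwInd n k Finset.univ)ᵀ *
        mwAdj n k W *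
        (mwInd n k T - ((T.card : ℝ) / n) • mwInd n k Finset.univ) := by
  have hUT : mwEdge n k W Finset.univ T = ((T.card : ℝ) * d) • 1 := by
    unfold mwEdge
    rw [Finset.sum_comm]
    simp only [hreg]
    rw [Finset.sum_const, ← Nat.cast_smul_eq_nsmul ℝ, smul_smul, mul_comm]
  have hSU : mwEdge n k W S Finset.univ = ((S.card : ℝ) * d) • 1 := by
    unfold mwEdge
    have : ∀ s : Fin n, ∑ t, W s t = d • (1 : Matrix (Fin k) (Fin k) ℝ) := by
      intro s
      calc ∑ t, W s t = ∑ t, W t s := by simp_rw [hsym s]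
        _ = _ := hreg s
    simp only [this]
    rw [Finset.sum_const, ← Nat.cast_smul_eq_nsmul ℝ, smul_smul, mul_comm]
  have hUU : mwEdge n k W Finset.univ Finset.univ = ((n : ℝ) * d) • 1 := by
    unfold mwEdge
    rw [Finset.sum_comm]
    simp only [hreg]
    rw [Finset.sum_const, Finset.card_univ, Fintype.card_fin,
      ← Nat.cast_smul_eq_nsmul ℝ, smul_smul, mul_comm]
  simp only [Matrix.transpose_sub, Matrix.transpose_smul, Matrix.sub_mul,
    Matrix.mul_sub, Matrix.smul_mul, Matrix.mul_smul, mwInd_adj, hUT, hSU, hUU,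
    smul_smul, smul_sub]
  rcases Nat.eq_zero_or_pos n with hn | hn
  · subst hn
    have hS : S = ∅ := Finset.eq_empty_of_isEmpty S
    have hT : T = ∅ := Finset.eq_empty_of_isEmpty T
    subst hS; subst hT
    simp [mwEdge]
  · have hn' : (n : ℝ) ≠ 0 := Nat.cast_ne_zero.mpr hn.ne'
    rw [← sub_smul, sub_sub, ← add_smul]
    congr 2
    field_simp
    ring
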